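/- arXiv:1402.3685 — 3 statements merged into one kernel-verified Lean document; each statement's English description precedes it below -/
import Mathlib

section
/- Let A be an abelian category and let (U,V) be the standard t-structure on D^b(A). For any object A ∈ A, any object U ∈ U, and any morphism f: A[0] → U[1] in D^b(A), there exists an epimorphism B → A in A such that the composition B[0] → A[0] → U[1] is zero. -/
/-!
Common definitions for formalizing statements from
"Derived equivalences for hereditary algebras: the role of the Serre functor".
-/

noncomputable section

open CategoryTheory CategoryTheory.Limits CategoryTheory.Pretriangulated

universe w₁ v₁ u₁ w v u

namespace Paper

variable (D : Type u) [Category.{v} D]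

/-- An object of a preadditive category is indecomposable if it is nonzero and any
biproduct decomposition `X ≅ Y ⊞ Z` has `Y = 0` or `Z = 0` (expressed elementarily). -/
def IndecomposableObj [Preadditive D] (X : D) : Prop :=
  ¬ IsZero X ∧
    ∀ (Y Z : D) (i : Y ⟶ X) (p : X ⟶ Y) (j : Z ⟶ X) (q : X ⟶ Z),
      i ≫ p = 𝟙 Y → j ≫ q = 𝟙 Z → i ≫ q = 0 → j ≫ p = 0 → p ≫ i + q ≫ j = 𝟙 X →
        IsZero Y ∨ IsZero Z

/-- A morphism `f : A ⟶ C` is right minimal if any `h : A ⟶ A` with `h ≫ f = f`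
is an automorphism. -/
def RightMinimal {A C : D} (f : A ⟶ C) : Prop :=
  ∀ h : A ⟶ A, h ≫ f = f → IsIso h

/-- The equivalence relation `f ∼_C g` on morphisms with target `C`. -/
def EquivOver {A B C : D} (f : A ⟶ C) (g : B ⟶ C) : Prop :=
  (∃ h₁ : A ⟶ B, h₁ ≫ g = f) ∧ (∃ h₂ : B ⟶ A, h₂ ≫ f = g)

section Serre

variable (k : Type u₁) [Field k] [Preadditive D] [CategoryTheory.Linear k D]

/-- A Serre functor on a `k`-linear category `D`: an autoequivalence `F` together with
isomorphisms `Hom(X,Y) ≅ Hom(Y, F X)*`, natural in `X` and `Y`. -/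
structure SerreFunctor where
  F : D ⥤ D
  isEquivalence : F.IsEquivalence
  η : ∀ X Y : D, (X ⟶ Y) ≃ₗ[k] Module.Dual k (Y ⟶ F.obj X)
  naturality_left : ∀ ⦃X' X Y : D⦄ (u : X' ⟶ X) (f : X ⟶ Y) (g : Y ⟶ F.obj X'),
    η X' Y (u ≫ f) g = η X Y f (g ≫ F.map u)
  naturality_right : ∀ ⦃X Y Y' : D⦄ (f : X ⟶ Y) (v : Y ⟶ Y') (g : Y' ⟶ F.obj X),
    η X Y' (f ≫ v) g = η X Y f (v ≫ g)

/-- A Serre functor on the strictly full subcategory of `D` whose objects are `S`;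
the Hom-spaces are the ambient ones. -/
structure SerreFunctorOn (S : Set D) where
  F : ObjectProperty.FullSubcategory (· ∈ S) ⥤ ObjectProperty.FullSubcategory (· ∈ S)
  isEquivalence : F.IsEquivalence
  η : ∀ X Y : ObjectProperty.FullSubcategory (· ∈ S),
    (X.obj ⟶ Y.obj) ≃ₗ[k] Module.Dual k (Y.obj ⟶ (F.obj X).obj)
  naturality_left : ∀ ⦃X' X Y : ObjectProperty.FullSubcategory (· ∈ S)⦄ (u : X' ⟶ X) (f : X.obj ⟶ Y.obj)
      (g : Y.obj ⟶ (F.obj X').obj),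
    η X' Y ((show X'.obj ⟶ X.obj from u.hom) ≫ f) g
      = η X Y f (g ≫ (show (F.obj X').obj ⟶ (F.obj X).obj from (F.map u).hom))
  naturality_right : ∀ ⦃X Y Y' : ObjectProperty.FullSubcategory (· ∈ S)⦄ (f : X.obj ⟶ Y.obj) (v : Y ⟶ Y')
      (g : Y'.obj ⟶ (F.obj X).obj),
    η X Y' (f ≫ (show Y.obj ⟶ Y'.obj from v.hom)) g = η X Y f ((show Y.obj ⟶ Y'.obj from v.hom) ≫ g)

end Serre

section Triangulated

variable [HasZeroObject D] [Preadditive D] [HasShift D ℤ]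
  [∀ n : ℤ, (shiftFunctor D n).Additive] [Pretriangulated D]

/-- A t-structure on the strictly full (pretriangulated) subcategory of `D` with objects `S`:
a pair `(U, V)` of strictly full subcategories with `U[1] ⊆ U`, `V ⊆ V[1]`,
`Hom(U[1], V) = 0`, and truncation triangles for every object of `S`. -/
structure TStructureOn (S : Set D) where
  U : Set D
  V : Set D
  U_subset : U ⊆ S
  V_subset : V ⊆ S
  U_iso : ∀ ⦃X Y : D⦄, (X ≅ Y) → X ∈ U → Y ∈ U
  V_iso : ∀ ⦃X Y : D⦄, (X ≅ Y) → X ∈ V → Y ∈ V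
  U_shift : ∀ ⦃X : D⦄, X ∈ U → X⟦(1 : ℤ)⟧ ∈ U
  V_shift : ∀ ⦃X : D⦄, X ∈ V → X⟦(-1 : ℤ)⟧ ∈ V
  hom_zero : ∀ ⦃X Y : D⦄, X ∈ U → Y ∈ V → ∀ f : X⟦(1 : ℤ)⟧ ⟶ Y, f = 0
  exists_triangle : ∀ C₀ ∈ S, ∃ (X Y : D) (_ : X ∈ U) (_ : Y⟦(1 : ℤ)⟧ ∈ V)
    (f : X ⟶ C₀) (g : C₀ ⟶ Y) (h : Y ⟶ X⟦(1 : ℤ)⟧), Triangle.mk f g h ∈ distTriang D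

namespace TStructureOn

variable {D} {S : Set D} (t : TStructureOn D S)

/-- The heart of a t-structure, as a set of objects. -/
def heartSet : Set D := t.U ∩ t.V

/-- The heart of a t-structure, as a (full sub)category. -/
abbrev Heart := ObjectProperty.FullSubcategory (· ∈ t.heartSet)

/-- The inclusion of the heart into the ambient category. -/
def heartIncl : t.Heart ⥤ D := ObjectProperty.ι _

/-- A t-structure is bounded if every object of the (sub)category lies in some shift
of the aisle and in some shift of the coaisle. -/
def IsBounded : Prop :=
  (∀ X ∈ S, ∃ n : ℤ, X⟦n⟧ ∈ t.U) ∧ (∀ X ∈ S, ∃ n : ℤ, X⟦n⟧ ∈ t.V)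

end TStructureOn

/-- The aisle `U` of a t-structure is stable under a Serre functor on the ambient
(sub)category. -/
def SerreStable (k : Type u₁) [Field k] [CategoryTheory.Linear k D] {S : Set D}
    (Se : SerreFunctorOn D k S) (U : Set D) : Prop :=
  ∀ X : ObjectProperty.FullSubcategory (· ∈ S), X.obj ∈ U → (Se.F.obj X).obj ∈ U

/-- A preaisle in the strictly full subcategory of `D` with objects `S`: a strictly full
subcategory closed under suspension and extensions. -/
def IsPreaisleOn (S P : Set D) : Prop :=
  P ⊆ S ∧ (∀ ⦃X Y : D⦄, (X ≅ Y) → X ∈ P → Y ∈ P) ∧ (∀ ⦃X : D⦄, X ∈ P → X⟦(1 : ℤ)⟧ ∈ P) ∧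
    (∀ T : Triangle D, (T ∈ distTriang D) → T.obj₁ ∈ P → T.obj₃ ∈ P → T.obj₂ ∈ S → T.obj₂ ∈ P)

/-- The smallest preaisle (in the subcategory with objects `S`) containing `E`. -/
def preaisleGenOn (S : Set D) (E : D) : Set D :=
  ⋂₀ {P : Set D | IsPreaisleOn D S P ∧ E ∈ P}

/-- A thick (triangulated, retract-closed) subcategory of the subcategory with objects `S`. -/
def IsThickOn (S P : Set D) : Prop :=
  P ⊆ S ∧ (∀ ⦃X Y : D⦄, (X ≅ Y) → X ∈ P → Y ∈ P) ∧
    (∀ ⦃X : D⦄, X ∈ P → X⟦(1 : ℤ)⟧ ∈ P ∧ X⟦(-1 : ℤ)⟧ ∈ P) ∧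
    (∀ T : Triangle D, (T ∈ distTriang D) → T.obj₁ ∈ P → T.obj₃ ∈ P → T.obj₂ ∈ S → T.obj₂ ∈ P) ∧
    (∀ ⦃X Y : D⦄, X ∈ P → Y ∈ S → ∀ (i : Y ⟶ X) (r : X ⟶ Y), i ≫ r = 𝟙 Y → Y ∈ P)

/-- The smallest thick subcategory (of the subcategory with objects `S`) containing `E`. -/
def thickGenOn (S : Set D) (E : D) : Set D :=
  ⋂₀ {P : Set D | IsThickOn D S P ∧ E ∈ P}

/-- `E` is a partial silting object: `Hom(E, E[n]) = 0` for `n > 0`. -/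
def IsPartialSilting (S : Set D) (E : D) : Prop :=
  E ∈ S ∧ ∀ n : ℤ, 0 < n → ∀ f : E ⟶ E⟦n⟧, f = 0

/-- `E` is a silting object: partial silting and it generates the category as a thick
subcategory. -/
def IsSilting (S : Set D) (E : D) : Prop :=
  IsPartialSilting D S E ∧ thickGenOn D S E = S

/-- `E` is a partial tilting object: `Hom(E, E[n]) = 0` for `n ≠ 0`. -/
def IsPartialTilting (S : Set D) (E : D) : Prop :=
  E ∈ S ∧ ∀ n : ℤ, n ≠ 0 → ∀ f : E ⟶ E⟦n⟧, f = 0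

/-- `E` is a tilting object: partial tilting and it generates the category as a thick
subcategory. -/
def IsTilting (S : Set D) (E : D) : Prop :=
  IsPartialTilting D S E ∧ thickGenOn D S E = S

/-- The aisle `U` of the t-structure `t` is finitely generated: it is the smallest
preaisle containing some partial silting object. -/
def TStructureOn.FinitelyGenerated {D : Type u} [Category.{v} D] [HasZeroObject D]
    [Preadditive D] [HasShift D ℤ] [∀ n : ℤ, (shiftFunctor D n).Additive] [Pretriangulated D]
    {S : Set D} (t : TStructureOn D S) : Prop :=
  ∃ E : D, IsPartialSilting D S E ∧ t.U = preaisleGenOn D S E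

/-- A torsion class in the abelian category whose objects are `H` (the heart of a
t-structure on `D`, where short exact sequences correspond to distinguished triangles):
a strictly full subcategory closed under extensions and quotients, such that the
inclusion admits a right adjoint (expressed pointwise). -/
def IsTorsionClassOn (H T : Set D) : Prop :=
  T ⊆ H ∧ (∀ ⦃X Y : D⦄, (X ≅ Y) → X ∈ T → Y ∈ T) ∧
    (∀ Tr : Triangle D, (Tr ∈ distTriang D) → Tr.obj₁ ∈ T → Tr.obj₃ ∈ T → Tr.obj₂ ∈ H →
      Tr.obj₂ ∈ T) ∧
    (∀ Tr : Triangle D, (Tr ∈ distTriang D) → Tr.obj₁ ∈ H → Tr.obj₂ ∈ T → Tr.obj₃ ∈ H →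
      Tr.obj₃ ∈ T) ∧
    (∀ X ∈ H, ∃ (TX : D) (_ : TX ∈ T) (c : TX ⟶ X),
      ∀ (Y : D), Y ∈ T → ∀ φ : Y ⟶ X, ∃! ψ : Y ⟶ TX, ψ ≫ c = φ)

/-- A tilting torsion class: a torsion class such that every object of the heart embeds
(in the heart) into an object of the torsion class. -/
def IsTiltingTorsionClassOn (H T : Set D) : Prop :=
  IsTorsionClassOn D H T ∧ ∀ (X : D) (hX : X ∈ H), ∃ (T' : D) (_ : T' ∈ T) (hT'H : T' ∈ H)
    (f : X ⟶ T'), Mono (show (⟨X, hX⟩ : ObjectProperty.FullSubcategory (· ∈ H)) ⟶ ⟨T', hT'H⟩ from ObjectProperty.homMk f)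

end Triangulated

section Db

variable (A : Type u) [Category.{v} A] [Abelian A] [HasDerivedCategory.{w} A]

/-- The objects of the bounded derived category `D^b(A)`, i.e. the objects of the
derived category of `A` with bounded cohomology. -/
def Bdd : Set (DerivedCategory A) :=
  {X | ∃ a b : ℤ, ∀ n : ℤ, (n < a ∨ b < n) →
    IsZero ((DerivedCategory.homologyFunctor A n).obj X)}

lemma shift_mem_Bdd {X : DerivedCategory A} (hX : X ∈ Bdd A) (m : ℤ) : X⟦m⟧ ∈ Bdd A := by
  obtain ⟨a, b, h⟩ := hX
  refine ⟨a - m, b - m, fun n hn => ?_⟩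
  exact IsZero.of_iso (h (m + n) (by omega))
    (((DerivedCategory.homologyFunctor A 0).shiftIso m n (m + n) rfl).app X)

/-- The canonical functor `A ⥤ D^b(A) ⊆ D(A)`, sending an object to the corresponding
complex concentrated in degree `0`. -/
def singleQ : A ⥤ DerivedCategory A :=
  HomologicalComplex.single A (ComplexShape.up ℤ) 0 ⋙ DerivedCategory.Q

lemma singleQ_obj_mem_Bdd (M : A) : (singleQ A).obj M ∈ Bdd A := by
  refine ⟨0, 0, fun n hn => ?_⟩
  refine IsZero.of_iso ?_
    ((DerivedCategory.homologyFunctorFactors A n).app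
      ((HomologicalComplex.single A (ComplexShape.up ℤ) 0).obj M))
  exact HomologicalComplex.isZero_single_obj_homology _ _ M n (by omega)

/-- The bounded derived category of `A`, as the full subcategory of `D(A)` whose objects
have bounded cohomology. -/
abbrev BddCat := ObjectProperty.FullSubcategory (· ∈ Bdd A)

/-- The suspension functor on the bounded derived category. -/
def bddShift : BddCat A ⥤ BddCat A :=
  ObjectProperty.lift _ (ObjectProperty.ι _ ⋙ shiftFunctor (DerivedCategory A) (1 : ℤ))
    (fun X => shift_mem_Bdd A X.property 1)

/-- The canonical functor `A ⥤ D^b(A)`. -/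
def bddSingle : A ⥤ BddCat A :=
  ObjectProperty.lift _ (singleQ A) (singleQ_obj_mem_Bdd A)

/-- `A` has global dimension at most `d`: `Ext^n(M, N) = 0` for all `n > d`
(expressed via morphisms in the derived category). -/
def HasGlobalDimensionLE (d : ℕ) : Prop :=
  ∀ (M N : A) (n : ℤ), (d : ℤ) < n → ∀ f : (singleQ A).obj M ⟶ ((singleQ A).obj N)⟦n⟧, f = 0

/-- An abelian category is hereditary if `Ext²(-, -) = 0` (equivalently, it has global
dimension at most `1`). -/
def IsHereditaryCat : Prop := HasGlobalDimensionLE A 1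

/-- `A` is Ext-finite over `k`: all Ext-spaces between objects of `A` are
finite-dimensional over `k`. -/
def ExtFinite (k : Type u₁) [Field k] [CategoryTheory.Linear k (DerivedCategory A)] : Prop :=
  ∀ (M N : A) (n : ℤ),
    FiniteDimensional k ((singleQ A).obj M ⟶ ((singleQ A).obj N)⟦n⟧)

/-- The Grothendieck group `K₀` of an abelian category. -/
def K0 : Type u :=
  FreeAbelianGroup (Quotient (isIsomorphicSetoid A)) ⧸
    AddSubgroup.closure {x | ∃ Sc : ShortComplex A, Sc.ShortExact ∧
      x = FreeAbelianGroup.of (Quotient.mk (isIsomorphicSetoid A) Sc.X₂)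
        - FreeAbelianGroup.of (Quotient.mk (isIsomorphicSetoid A) Sc.X₁)
        - FreeAbelianGroup.of (Quotient.mk (isIsomorphicSetoid A) Sc.X₃)}

/-- The class of an object of `A` in `K₀(A)`. -/
def K0cls (M : A) : K0 A :=
  QuotientAddGroup.mk (FreeAbelianGroup.of (Quotient.mk (isIsomorphicSetoid A) M))

/-- `D^b(A)` is discrete: for every function `v : ℤ → K₀(A)` there are only finitely many
isomorphism classes of bounded objects `X` with `[H^i(X)] = v i` for all `i`. -/
def DerivedDiscrete : Prop :=
  ∀ v : ℤ → K0 A,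
    Set.Finite {c : Quotient (isIsomorphicSetoid (BddCat A)) |
      ∃ X : BddCat A, Quotient.mk (isIsomorphicSetoid (BddCat A)) X = c ∧
        ∀ i : ℤ, K0cls A ((DerivedCategory.homologyFunctor A i).obj X.obj) = v i}

end Db

/-- The property that the inclusion `ι : H ⟶ D` of a (heart-like) abelian subcategory
of the triangulated category `D` lifts to a triangulated equivalence from `D^b(H)` to
the strictly full subcategory of `D` with objects `S`. -/
structure DbEquivalence (H : Type u₁) [Category.{v₁} H] [Abelian H] [HasDerivedCategory.{w₁} H]
    (D : Type u) [Category.{v} D] [HasZeroObject D] [Preadditive D] [HasShift D ℤ]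
    [∀ n : ℤ, (shiftFunctor D n).Additive] [Pretriangulated D]
    (S : Set D) (ι : H ⥤ D) where
  /-- the underlying functor `D^b(H) ⥤ D` -/
  F : BddCat H ⥤ D
  mem : ∀ X : BddCat H, F.obj X ∈ S
  /-- `F` commutes with the suspension -/
  commShift : bddShift H ⋙ F ≅ F ⋙ shiftFunctor D (1 : ℤ)
  /-- `F` sends distinguished triangles of `D^b(H)` to distinguished triangles of `D` -/
  map_distinguished : ∀ (T : Triangle (DerivedCategory H)) (_ : T ∈ distTriang (DerivedCategory H))
      (h₁ : T.obj₁ ∈ Bdd H) (h₂ : T.obj₂ ∈ Bdd H) (h₃ : T.obj₃ ∈ Bdd H),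
      Triangle.mk (F.map (X := ⟨T.obj₁, h₁⟩) (Y := ⟨T.obj₂, h₂⟩) (ObjectProperty.homMk T.mor₁))
        (F.map (X := ⟨T.obj₂, h₂⟩) (Y := ⟨T.obj₃, h₃⟩) (ObjectProperty.homMk T.mor₂))
        (F.map (X := ⟨T.obj₃, h₃⟩) (Y := (bddShift H).obj ⟨T.obj₁, h₁⟩) (ObjectProperty.homMk T.mor₃) ≫
          commShift.hom.app ⟨T.obj₁, h₁⟩) ∈ distTriang D
  faithful : F.Faithful
  full : F.Full
  /-- `F` is essentially surjective onto the subcategory with objects `S` -/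
  essSurj : ∀ Y : D, Y ∈ S → ∃ X : BddCat H, Nonempty (F.obj X ≅ Y)
  /-- `F` extends the inclusion `ι` of `H` -/
  extends_incl : bddSingle H ⋙ F ≅ ι

section Algebra

/-- A ring `Γ` has global dimension at most `d`. -/
def RingGlobalDimLE (Γ : Type u) [Ring Γ] (d : ℕ) : Prop :=
  letI : HasDerivedCategory (ModuleCat.{u} Γ) := HasDerivedCategory.standard _
  HasGlobalDimensionLE (ModuleCat.{u} Γ) d

/-- The category `mod Λ` of finite-dimensional (equivalently, finitely generated) right
modules over a finite-dimensional algebra `Λ`, i.e. finitely generated left modules over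
`Λᵐᵒᵖ`. -/
abbrev ModA (Λ : Type u) [Ring Λ] := FGModuleCat Λᵐᵒᵖ

/-- A finite-dimensional algebra is hereditary if the category of its right modules is
hereditary, i.e. if `Λ` has right global dimension at most 1. -/
def HereditaryAlg (Λ : Type u) [Ring Λ] : Prop := RingGlobalDimLE Λᵐᵒᵖ 1

end Algebra

end Paper

namespace Paper

/-- Composite of a chain of morphisms `Z 0 ⟶ Z 1 ⟶ ⋯ ⟶ Z n`. -/
def chainComp {D : Type u} [Category.{v} D] (Z : ℕ → D) (g : ∀ i : ℕ, Z i ⟶ Z (i + 1)) :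
    ∀ n : ℕ, Z 0 ⟶ Z n
  | 0 => 𝟙 (Z 0)
  | n + 1 => chainComp Z g n ≫ g n

variable (A : Type u) [Category.{v} A] [Abelian A] [HasDerivedCategory.{w} A]

/-- The aisle of the standard t-structure on `D^b(A)`: bounded complexes with vanishing
cohomology in positive degrees. -/
def stdAisle : Set (DerivedCategory A) :=
  {X | X ∈ Bdd A ∧ ∀ n : ℤ, 0 < n → IsZero ((DerivedCategory.homologyFunctor A n).obj X)}

/-- The coaisle of the standard t-structure on `D^b(A)`: bounded complexes with vanishing
cohomology in negative degrees. -/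
def stdCoaisle : Set (DerivedCategory A) :=
  {X | X ∈ Bdd A ∧ ∀ n : ℤ, n < 0 → IsZero ((DerivedCategory.homologyFunctor A n).obj X)}

end Paper


namespace Paper
section Aux
variable {A : Type u} [Category.{v} A] [Abelian A]


lemma sc_lemma (S : ShortComplex A) (hS : S.Exact) (M : A) (a : M ⟶ S.X₂) (ha : a ≫ S.g = 0) :
    ∃ (B : A) (e : B ⟶ M) (b : B ⟶ S.X₁), Epi e ∧ e ≫ a = b ≫ S.f := by
  have := hS.epi_toCycles
  refine ⟨pullback (S.liftCycles a ha) S.toCycles, pullback.fst _ _, pullback.snd _ _,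
    inferInstance, ?_⟩
  have h := pullback.condition (f := S.liftCycles a ha) (g := S.toCycles)
  calc pullback.fst _ _ ≫ a
      = pullback.fst _ _ ≫ S.liftCycles a ha ≫ S.iCycles := by rw [S.liftCycles_i]
    _ = pullback.snd _ _ ≫ S.toCycles ≫ S.iCycles := by rw [← Category.assoc, h, Category.assoc]
    _ = pullback.snd _ _ ≫ S.f := by rw [S.toCycles_i]

lemma cx_lemma (Y : CochainComplex A ℤ) (hY : IsZero (Y.homology 0)) (M : A)
    (a : (HomologicalComplex.single A (ComplexShape.up ℤ) 0).obj M ⟶ Y) :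
    ∃ (B : A) (e : B ⟶ M), Epi e ∧
      Nonempty (Homotopy ((HomologicalComplex.single A (ComplexShape.up ℤ) 0).map e ≫ a) 0) := by
  have hprev : (ComplexShape.up ℤ).prev 0 = -1 := by rw [CochainComplex.prev]; norm_num
  have hnext : (ComplexShape.up ℤ).next 0 = 1 := by rw [CochainComplex.next]; norm_num
  have hEA : Y.ExactAt 0 := (Y.exactAt_iff_isZero_homology 0).2 hY
  have hex : (Y.sc' (-1) 0 1).Exact := (Y.exactAt_iff' (-1) 0 1 hprev hnext).1 hEA
  have ha : ((HomologicalComplex.singleObjXSelf (ComplexShape.up ℤ) 0 M).inv ≫ a.f 0) ≫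
      (Y.sc' (-1) 0 1).g = 0 := by
    have := a.comm 0 1
    show (_ ≫ a.f 0) ≫ Y.d 0 1 = 0
    rw [Category.assoc, this]
    simp
  obtain ⟨B, e, b, he, hcomm⟩ := sc_lemma _ hex M _ ha
  have hb : (e ≫ (HomologicalComplex.singleObjXSelf (ComplexShape.up ℤ) 0 M).inv ≫ a.f 0
      : B ⟶ Y.X 0) = b ≫ Y.d (-1) 0 := hcomm
  refine ⟨B, e, he, ⟨?_⟩⟩
  refine
    { hom := fun i j =>
        if h : i = 0 ∧ j = -1 then
          eqToHom (by rw [h.1]) ≫ (HomologicalComplex.singleObjXSelf (ComplexShape.up ℤ) 0 B).hom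
            ≫ b ≫ eqToHom (by rw [h.2]; rfl : (Y.sc' (-1) 0 1).X₁ = Y.X j)
        else 0
      zero := fun i j hn => by
        rw [dif_neg]
        rintro ⟨rfl, rfl⟩
        exact hn (by simp)
      comm := fun i => by
        by_cases hi : i = 0
        · subst hi
          have hrel : (ComplexShape.up ℤ).Rel (-1) 0 := by simp
          have hrel' : (ComplexShape.up ℤ).Rel 0 1 := by simp
          rw [prevD_eq _ hrel, dNext_eq _ hrel']
          rw [dif_neg (show ¬((1:ℤ) = 0 ∧ (0:ℤ) = -1) by norm_num)]
          rw [dif_pos (show (0:ℤ) = 0 ∧ (-1:ℤ) = -1 from ⟨rfl, rfl⟩)]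
          simp only [eqToHom_refl, Category.id_comp, Category.comp_id, zero_comp, comp_zero,
            zero_add, add_zero, HomologicalComplex.zero_f_apply, HomologicalComplex.comp_f,
            HomologicalComplex.single_obj_d]
          rw [HomologicalComplex.single_map_f_self]
          simp only [Category.assoc]
          rw [hb]
          congr 2
          erw [eqToHom_refl]
          exact (Category.id_comp _).symm
        · apply ((HomologicalComplex.isZero_single_obj_X (ComplexShape.up ℤ) 0 B i hi)).eq_of_src }

end Aux
end Paper

open Paper in
/-- Let `A` be an abelian category and `(U, V)` the standard t-structure on
`D^b(A)`.  For any `A₀ ∈ A`, any `U ∈ U` and any morphism `f : A₀[0] → U[1]`, there is an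
epimorphism `B → A₀` in `A` such that the composite `B[0] → A₀[0] → U[1]` vanishes. -/
theorem exists_epi_killing_map_to_shifted_aisle
    (A : Type u) [Category.{v} A] [Abelian A] [HasDerivedCategory.{w} A]
    (M : A) (U : DerivedCategory A) (hU : U ∈ stdAisle A)
    (f : (singleQ A).obj M ⟶ U⟦(1 : ℤ)⟧) :
    ∃ (B : A) (e : B ⟶ M), Epi e ∧ (singleQ A).map e ≫ f = 0 := by
  haveI := Localization.essSurj DerivedCategory.Q
    (HomologicalComplex.quasiIso A (ComplexShape.up ℤ))
  haveI : (HomotopyCategory.quasiIso A (ComplexShape.up ℤ)).HasLeftCalculusOfFractions := by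
    rw [HomotopyCategory.quasiIso_eq_subcategoryAcyclic_W]
    infer_instance
  obtain ⟨K₁, ⟨α⟩⟩ : ∃ K₁, Nonempty (DerivedCategory.Q.obj K₁ ≅ U⟦(1 : ℤ)⟧) :=
    ⟨_, ⟨DerivedCategory.Q.objObjPreimageIso _⟩⟩
  have hK₁ : IsZero (K₁.homology 0) := by
    have h2 : IsZero ((DerivedCategory.homologyFunctor A 0).obj (U⟦(1 : ℤ)⟧)) :=
      IsZero.of_iso (hU.2 ((1 : ℤ) + 0) (by norm_num))
        (((DerivedCategory.homologyFunctor A 0).shiftIso (1 : ℤ) (0 : ℤ) ((1 : ℤ) + 0)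
          rfl).app U)
    have h3 : IsZero ((DerivedCategory.homologyFunctor A 0).obj (DerivedCategory.Q.obj K₁)) :=
      IsZero.of_iso h2 ((DerivedCategory.homologyFunctor A 0).mapIso α)
    exact IsZero.of_iso h3 ((DerivedCategory.homologyFunctorFactors A 0).app K₁).symm
  set X₀ := (HomologicalComplex.single A (ComplexShape.up ℤ) 0).obj M with hX₀
  let f₂ : DerivedCategory.Qh.obj
        ((HomotopyCategory.quotient A (ComplexShape.up ℤ)).obj X₀) ⟶
      DerivedCategory.Qh.obj ((HomotopyCategory.quotient A (ComplexShape.up ℤ)).obj K₁) :=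
    f ≫ α.inv
  obtain ⟨φ, hφ⟩ := Localization.exists_leftFraction DerivedCategory.Qh
    (HomotopyCategory.quasiIso A (ComplexShape.up ℤ)) f₂
  obtain ⟨a, ha⟩ := (HomotopyCategory.quotient A (ComplexShape.up ℤ)).map_surjective
    (show (HomotopyCategory.quotient A (ComplexShape.up ℤ)).obj X₀ ⟶
      (HomotopyCategory.quotient A (ComplexShape.up ℤ)).obj φ.Y'.as from φ.f)
  obtain ⟨u, hu⟩ := (HomotopyCategory.quotient A (ComplexShape.up ℤ)).map_surjective
    (show (HomotopyCategory.quotient A (ComplexShape.up ℤ)).obj K₁ ⟶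
      (HomotopyCategory.quotient A (ComplexShape.up ℤ)).obj φ.Y'.as from φ.s)
  have hqu : QuasiIso u := by
    rw [← HomologicalComplex.mem_quasiIso_iff, ← HomotopyCategory.quotient_map_mem_quasiIso_iff,
      hu]
    exact φ.hs
  have hYhom : IsZero ((φ.Y'.as).homology 0) := by
    have : IsIso (HomologicalComplex.homologyMap u 0) := by
      rw [← quasiIsoAt_iff_isIso_homologyMap]
      infer_instance
    exact IsZero.of_iso hK₁ (asIso (HomologicalComplex.homologyMap u 0)).symm
  obtain ⟨B, e, he, ⟨H⟩⟩ := Paper.cx_lemma (φ.Y'.as) hYhom M a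
  refine ⟨B, e, he, ?_⟩
  have hzero : (HomotopyCategory.quotient A (ComplexShape.up ℤ)).map
      ((HomologicalComplex.single A (ComplexShape.up ℤ) 0).map e ≫ a) = 0 := by
    rw [HomotopyCategory.eq_of_homotopy _ _ H]
    exact (HomotopyCategory.quotient A (ComplexShape.up ℤ)).map_zero _ _
  have key : (singleQ A).map e ≫ f₂ = 0 := by
    have hf₂ : f₂ = DerivedCategory.Qh.map φ.f ≫
        (Localization.isoOfHom DerivedCategory.Qh
          (HomotopyCategory.quasiIso A (ComplexShape.up ℤ)) φ.s φ.hs).inv :=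
      hφ.trans (φ.map_eq DerivedCategory.Qh)
    have ha' : (HomotopyCategory.quotient A (ComplexShape.up ℤ)).map a = φ.f := ha
    rw [hf₂, ← ha']
    have : (singleQ A).map e ≫ DerivedCategory.Qh.map
        ((HomotopyCategory.quotient A (ComplexShape.up ℤ)).map a) =
      DerivedCategory.Qh.map ((HomotopyCategory.quotient A (ComplexShape.up ℤ)).map
        ((HomologicalComplex.single A (ComplexShape.up ℤ) 0).map e ≫ a)) := by
      rw [Functor.map_comp, Functor.map_comp]
      rfl
    exact (Category.assoc _ _ _).symm.trans ((congrArg (· ≫ (Localization.isoOfHom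
      DerivedCategory.Qh (HomotopyCategory.quasiIso A (ComplexShape.up ℤ)) φ.s φ.hs).inv) this).trans
      (by rw [hzero, Functor.map_zero]; exact zero_comp))
  have hf : f = f₂ ≫ α.hom := by
    exact ((Category.assoc _ _ _).trans ((congrArg (f ≫ ·) α.inv_hom_id).trans
      (Category.comp_id f))).symm
  rw [hf]
  exact (Category.assoc _ _ _).symm.trans ((congrArg (· ≫ α.hom) key).trans zero_comp)
end
end

section
/- Let B be an abelian k-linear category and let f: A → C be a morphism in B such that End(A) is finite-dimensional over k. Then there exists a right minimal morphism g: B → C with f ∼_C g. -/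
/-!
Common definitions for formalizing statements from
"Derived equivalences for hereditary algebras: the role of the Serre functor".
-/

noncomputable section

open CategoryTheory CategoryTheory.Limits CategoryTheory.Pretriangulated

universe w₁ v₁ u₁ w v u

section RightMinAux

open CategoryTheory

variable {B : Type u} [Category.{v} B]

/-- `n`-th power of an endomorphism, via composition. -/
def mpow {A : B} (h : A ⟶ A) : ℕ → (A ⟶ A)
  | 0 => 𝟙 A
  | n + 1 => mpow h n ≫ h

@[simp] lemma mpow_zero {A : B} (h : A ⟶ A) : mpow h 0 = 𝟙 A := rfl

lemma mpow_succ {A : B} (h : A ⟶ A) (n : ℕ) : mpow h (n + 1) = mpow h n ≫ h := rfl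

lemma mpow_succ' {A : B} (h : A ⟶ A) (n : ℕ) : mpow h (n + 1) = h ≫ mpow h n := by
  induction n with
  | zero => simp [mpow_succ]
  | succ n ih =>
    rw [mpow_succ, ih, Category.assoc, ← mpow_succ h n, ih]

lemma mpow_comm {A : B} {h x : A ⟶ A} (hc : x ≫ h = h ≫ x) (n : ℕ) :
    x ≫ mpow h n = mpow h n ≫ x := by
  induction n with
  | zero => simp
  | succ n ih => rw [mpow_succ, ← Category.assoc, ih, Category.assoc, hc, ← Category.assoc]

lemma mpow_add {A : B} (h : A ⟶ A) (a b : ℕ) :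
    mpow h (a + b) = mpow h a ≫ mpow h b := by
  induction b with
  | zero => simp
  | succ b ih => rw [← Nat.add_assoc, mpow_succ, ih, mpow_succ, Category.assoc]

lemma mpow_comp {A : B} {x z : A ⟶ A} (hc : x ≫ z = z ≫ x) (n : ℕ) :
    mpow (x ≫ z) n = mpow x n ≫ mpow z n := by
  induction n with
  | zero => simp
  | succ n ih =>
    rw [mpow_succ, ih, mpow_succ, mpow_succ, Category.assoc, Category.assoc,
      ← Category.assoc (mpow z n) x z, ← mpow_comm hc, Category.assoc]

lemma mpow_comp_eq_self {A : B} {X : B} {h : A ⟶ A} {f : A ⟶ X} (hf : h ≫ f = f) (n : ℕ) :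
    mpow h n ≫ f = f := by
  induction n with
  | zero => simp
  | succ n ih => rw [mpow_succ', Category.assoc, ih, hf]

/-- The key Fitting-type lemma: if `h ≫ f = f` and `h` is not an isomorphism, we can
split off a direct summand `I` of `A` such that `f` is equivalent to its restriction to
`I`, and the endomorphism space of `I` is strictly smaller. -/
lemma fitting_step {k : Type u₁} [Field k] [Abelian B] [CategoryTheory.Linear k B]
    {A C : B} (f : A ⟶ C) (hfd : FiniteDimensional k (A ⟶ A)) (h : A ⟶ A)
    (hhf : h ≫ f = f) (hni : ¬ IsIso h) :
    ∃ (I : B) (i : I ⟶ A) (e : A ⟶ I),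
      e ≫ (i ≫ f) = f ∧
      ∃ (_ : FiniteDimensional k (I ⟶ I)),
        Module.finrank k (I ⟶ I) < Module.finrank k (A ⟶ A) := by
  classical
  haveI := hfd
  set N := Module.finrank k (A ⟶ A) with hN
  -- the powers `𝟙, h, h², …, h^N` are linearly dependent
  have hnli : ¬ LinearIndependent k (fun j : Fin (N + 1) => mpow h (j : ℕ)) := by
    intro hli
    have := hli.fintype_card_le_finrank
    simp only [Fintype.card_fin, ← hN] at this
    omega
  rw [Fintype.not_linearIndependent_iff] at hnli
  obtain ⟨c, hc, i₀, hi₀⟩ := hnli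
  set c' : ℕ → k := fun n => if hn : n < N + 1 then c ⟨n, hn⟩ else 0 with hc'
  have hex : ∃ n, c' n ≠ 0 := ⟨i₀, by simpa [hc', i₀.isLt, Fin.is_le i₀] using hi₀⟩
  haveI : DecidablePred fun n => c' n ≠ 0 := fun _ => Classical.dec _
  set m := Nat.find hex with hmdef
  have hm : c' m ≠ 0 := Nat.find_spec hex
  have hmin : ∀ j, j < m → c' j = 0 := by
    intro j hj
    have hj' : j < Nat.find hex := by omega
    exact not_not.mp (Nat.find_min hex hj')
  have hmN : m < N + 1 := by
    by_contra hmN'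
    exact hm (by simp only [hc', dif_neg (show ¬ m < N + 1 by omega)])
  have hsum : ∑ n ∈ Finset.range (N + 1), c' n • mpow h n = 0 := by
    rw [← Fin.sum_univ_eq_sum_range (fun n => c' n • mpow h n) (N + 1), ← hc]
    refine Finset.sum_congr rfl fun j _ => ?_
    simp [hc', j.isLt, Nat.not_lt.mpr (Fin.is_le j)]
  have hsum2 : c' m • mpow h m
      + ∑ n ∈ Finset.Ico (m + 1) (N + 1), c' n • mpow h n = 0 := by
    have h1 : ∑ n ∈ Finset.Ico m (N + 1), c' n • mpow h n = 0 := by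
      rw [← Finset.sum_range_add_sum_Ico (fun n => c' n • mpow h n) (le_of_lt hmN),
        Finset.sum_eq_zero (fun j hj => by
          rw [hmin j (Finset.mem_range.mp hj), zero_smul]), zero_add] at hsum
      exact hsum
    have h2 := Finset.sum_eq_sum_Ico_succ_bot hmN (fun n => c' n • mpow h n)
    rw [h1] at h2
    simpa using h2.symm
  -- express `h^m` in terms of higher powers
  set y : A ⟶ A :=
    ∑ n ∈ Finset.Ico (m + 1) (N + 1), (-((c' m)⁻¹ * c' n)) • mpow h (n - (m + 1)) with hy
  have hYH : y ≫ h = h ≫ y := by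
    rw [hy, Preadditive.sum_comp, Preadditive.comp_sum]
    refine Finset.sum_congr rfl fun n _ => ?_
    rw [Linear.smul_comp, Linear.comp_smul, mpow_comm rfl]
  have hsum3 : ∑ n ∈ Finset.Ico (m + 1) (N + 1), c' n • mpow h n
      = -(c' m • mpow h m) := by
    rw [eq_neg_iff_add_eq_zero, add_comm]
    exact hsum2
  have key : (y ≫ h) ≫ mpow h m = mpow h m := by
    calc (y ≫ h) ≫ mpow h m = y ≫ mpow h (m + 1) := by
          rw [Category.assoc, ← mpow_succ']
    _ = ∑ n ∈ Finset.Ico (m + 1) (N + 1),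
          (-(c' m)⁻¹) • (c' n • mpow h n) := by
        rw [hy, Preadditive.sum_comp]
        refine Finset.sum_congr rfl fun n hn => ?_
        obtain ⟨hn1, _⟩ := Finset.mem_Ico.mp hn
        rw [Linear.smul_comp, ← mpow_add, show n - (m + 1) + (m + 1) = n by omega,
          smul_smul]
        congr 1
        ring
    _ = (-(c' m)⁻¹) • ∑ n ∈ Finset.Ico (m + 1) (N + 1), c' n • mpow h n :=
        (Finset.smul_sum).symm
    _ = mpow h m := by
        rw [hsum3, smul_neg, neg_smul, neg_neg, smul_smul, inv_mul_cancel₀ hm, one_smul]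
  have hTH : (y ≫ h) ≫ h = h ≫ (y ≫ h) := by
    rw [Category.assoc]
    conv_rhs => rw [← Category.assoc, ← hYH, Category.assoc]
  have key' : (y ≫ h) ≫ mpow h (m + 1) = mpow h (m + 1) := by
    rw [mpow_succ' h m, ← Category.assoc, hTH, Category.assoc, key]
  set t : A ⟶ A := y ≫ h with ht
  have hhy : y ≫ h = h ≫ y := by rw [← ht]; exact hYH
  set M := m + 1 with hM
  have hQP : ∀ j, mpow t j ≫ mpow h M = mpow h M := by
    intro j
    induction j with
    | zero => simp
    | succ j ih => rw [mpow_succ', Category.assoc, ih, key']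
  set u : A ⟶ A := mpow t M with hu
  have hPT : t ≫ mpow h M = mpow h M ≫ t := mpow_comm hTH M
  have hPU : mpow h M ≫ u = u ≫ mpow h M := mpow_comm hPT.symm M
  have hu_pm : u ≫ mpow h M = mpow h M := hQP M
  have hpu2 : mpow h M ≫ u = mpow h M := by rw [hPU, hu_pm]
  have hu_eq : u = mpow y M ≫ mpow h M := by rw [hu, ht, mpow_comp hhy]
  have huu : u ≫ u = u := by
    nth_rewrite 1 [hu_eq]
    rw [Category.assoc, hpu2, ← hu_eq]
  have hpf : mpow h M ≫ f = f := mpow_comp_eq_self hhf M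
  have huf : u ≫ f = f := by
    conv_lhs => rw [← hpf, ← Category.assoc, hu_pm]
    exact hpf
  have hu_ne : u ≠ 𝟙 A := by
    intro hu1
    apply hni
    have hz1 : (mpow t m ≫ y) ≫ h = 𝟙 A := by
      rw [Category.assoc, ← ht, ← mpow_succ, ← hM, ← hu, hu1]
    have hz2 : h ≫ (mpow t m ≫ y) = 𝟙 A := by
      have c1 : h ≫ mpow t m = mpow t m ≫ h := mpow_comm hTH.symm m
      rw [← Category.assoc, c1, Category.assoc, ← hhy, ← Category.assoc]
      exact hz1
    exact ⟨mpow t m ≫ y, hz2, hz1⟩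
  -- split the idempotent `u`
  obtain ⟨I, i, e, hie, hei⟩ := IsIdempotentComplete.idempotents_split A u huu
  refine ⟨I, i, e, ?_, ?_⟩
  · rw [← Category.assoc, hei, huf]
  · -- the endomorphism algebra of `I` embeds properly into that of `A`
    let Φ : (I ⟶ I) →ₗ[k] (A ⟶ A) :=
      { toFun := fun φ => e ≫ φ ≫ i
        map_add' := fun φ ψ => by
          rw [Preadditive.add_comp, Preadditive.comp_add]
        map_smul' := fun r φ => by
          rw [Linear.smul_comp, Linear.comp_smul, RingHom.id_apply] }
    have hΦ : ∀ φ : I ⟶ I, Φ φ = e ≫ φ ≫ i := fun _ => rfl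
    have hsec : ∀ φ : I ⟶ I, i ≫ (Φ φ) ≫ e = φ := by
      intro φ
      calc i ≫ (e ≫ φ ≫ i) ≫ e = (i ≫ e) ≫ φ ≫ (i ≫ e) := by
            simp only [Category.assoc]
      _ = φ := by rw [hie]; simp
    have hinj : Function.Injective Φ := by
      intro φ ψ hφψ
      rw [← hsec φ, ← hsec ψ, hφψ]
    haveI hfdI : FiniteDimensional k (I ⟶ I) := FiniteDimensional.of_injective Φ hinj
    refine ⟨hfdI, ?_⟩
    have hrange_ne : LinearMap.range Φ ≠ ⊤ := by
      intro htop
      have hmem : (𝟙 A - u) ∈ LinearMap.range Φ := htop ▸ Submodule.mem_top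
      obtain ⟨φ, hφ⟩ := hmem
      have e1 : u ≫ (Φ φ) ≫ u = Φ φ := by
        rw [hΦ, ← hei]
        calc (e ≫ i) ≫ (e ≫ φ ≫ i) ≫ (e ≫ i)
            = e ≫ (i ≫ e) ≫ φ ≫ (i ≫ e) ≫ i := by simp only [Category.assoc]
        _ = e ≫ φ ≫ i := by rw [hie]; simp
      have e2 : u ≫ (𝟙 A - u) ≫ u = 0 := by
        rw [Preadditive.sub_comp, Category.id_comp, huu, sub_self, Limits.comp_zero]
      rw [hφ, e2] at e1
      exact hu_ne (sub_eq_zero.mp e1.symm).symm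
    calc Module.finrank k (I ⟶ I) = Module.finrank k (LinearMap.range Φ) :=
          (LinearMap.finrank_range_of_inj hinj).symm
    _ < Module.finrank k (A ⟶ A) :=
          Submodule.finrank_lt hrange_ne

end RightMinAux

open Paper in
/-- Let `B` be an abelian `k`-linear category and `f : A ⟶ C` a morphism
with `End(A)` finite-dimensional over `k`.  Then there is a right minimal morphism
`g : B' ⟶ C` with `f ∼_C g`. -/
theorem exists_right_minimal_version
    (k : Type u₁) [Field k] (B : Type u) [Category.{v} B] [Abelian B]
    [CategoryTheory.Linear k B] {A C : B} (f : A ⟶ C)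
    (hfd : FiniteDimensional k (A ⟶ A)) :
    ∃ (B' : B) (g : B' ⟶ C), RightMinimal B g ∧ EquivOver B f g := by
  classical
  suffices H : ∀ (n : ℕ) (A' : B) (f' : A' ⟶ C), FiniteDimensional k (A' ⟶ A') →
      Module.finrank k (A' ⟶ A') ≤ n →
      ∃ (B' : B) (g : B' ⟶ C), RightMinimal B g ∧ EquivOver B f' g by
    exact H (Module.finrank k (A ⟶ A)) A f hfd le_rfl
  intro n
  induction n using Nat.strong_induction_on with
  | _ n IH =>
    intro A' f' hfd' hle
    by_cases hrm : RightMinimal B f'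
    · exact ⟨A', f', hrm, ⟨𝟙 A', Category.id_comp f'⟩, ⟨𝟙 A', Category.id_comp f'⟩⟩
    · unfold RightMinimal at hrm
      push_neg at hrm
      obtain ⟨h, hhf, hni⟩ := hrm
      obtain ⟨I, i, e, hef, hfdI, hlt⟩ := fitting_step f' hfd' h hhf hni
      obtain ⟨B', g, hg, ⟨a₁, ha₁⟩, ⟨a₂, ha₂⟩⟩ :=
        IH (Module.finrank k (I ⟶ I)) (lt_of_lt_of_le hlt hle) I (i ≫ f') hfdI le_rfl
      exact ⟨B', g, hg, ⟨e ≫ a₁, by rw [Category.assoc, ha₁, hef]⟩,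
        ⟨a₂ ≫ i, by rw [Category.assoc, ha₂]⟩⟩
end
end

section
/- Let B be an abelian k-linear category and let f: A → C be a morphism with End(A) finite-dimensional over k. Then f is right minimal if and only if for every nonzero direct summand A' of A, the restriction f|_{A'}: A' → C of f to A' is nonzero. -/
/-!
Common definitions for formalizing statements from
"Derived equivalences for hereditary algebras: the role of the Serre functor".
-/

noncomputable section

open CategoryTheory CategoryTheory.Limits CategoryTheory.Pretriangulated

universe w₁ v₁ u₁ w v u

open Paper in
/-- Let `B` be an abelian `k`-linear category and `f : A ⟶ C` a morphism
with `End(A)` finite-dimensional over `k`.  Then `f` is right minimal iff for every nonzero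
direct summand `A'` of `A` the restriction of `f` to `A'` is nonzero. -/
theorem right_minimal_iff_restriction_to_summands_nonzero
    (k : Type u₁) [Field k] (B : Type u) [Category.{v} B] [Abelian B]
    [CategoryTheory.Linear k B] {A C : B} (f : A ⟶ C)
    (hfd : FiniteDimensional k (A ⟶ A)) :
    RightMinimal B f ↔
      ∀ (A' : B) (i : A' ⟶ A) (p : A ⟶ A'), i ≫ p = 𝟙 A' → ¬ IsZero A' → i ≫ f ≠ 0 := by
  constructor
  · intro hmin A' i p hip hA' hif
    have h1 : (𝟙 A - p ≫ i) ≫ f = f := by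
      rw [Preadditive.sub_comp, Category.id_comp, Category.assoc, hif, comp_zero, sub_zero]
    haveI := hmin _ h1
    have h2 : i ≫ (𝟙 A - p ≫ i) = 0 := by
      rw [Preadditive.comp_sub, Category.comp_id, ← Category.assoc, hip, Category.id_comp,
        sub_self]
    have hi0 : i = 0 := by
      rw [← Category.comp_id i, ← IsIso.hom_inv_id (𝟙 A - p ≫ i), ← Category.assoc, h2,
        zero_comp]
    exact hA' ((Limits.IsZero.iff_id_eq_zero A').2 (by rw [← hip, hi0, zero_comp]))
  · intro hyp h hhf
    haveI : FiniteDimensional k (CategoryTheory.End A) := hfd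
    set H : CategoryTheory.End A := h with hH
    have hint : IsIntegral k H := IsIntegral.of_finite k H
    have hμ0 : Polynomial.aeval H (minpoly k H) = 0 := minpoly.aeval k H
    have hμne : minpoly k H ≠ 0 := minpoly.ne_zero hint
    have hpow : ∀ n : ℕ, (H ^ n : A ⟶ A) ≫ f = f := by
      intro n; induction n with
      | zero => rw [pow_zero, CategoryTheory.End.one_def, Category.id_comp]
      | succ n ih =>
        have hmul : (H ^ (n + 1) : CategoryTheory.End A) = h ≫ (H ^ n : A ⟶ A) := by
          rw [pow_succ, CategoryTheory.End.mul_def]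
        rw [show (H ^ (n+1) : A ⟶ A) = h ≫ (H ^ n : A ⟶ A) from hmul, Category.assoc, ih, hhf]
    have hcomm : ∀ P Q : Polynomial k,
        Polynomial.aeval H P * Polynomial.aeval H Q
          = Polynomial.aeval H Q * Polynomial.aeval H P := by
      intro P Q; rw [← map_mul, mul_comm, map_mul]
    have key : ∀ u : CategoryTheory.End A, u * H = 1 → H * u = 1 → IsIso h := by
      intro u h1 h2
      exact ⟨u, h1, h2⟩
    by_cases hc : (minpoly k H).coeff 0 = 0
    · obtain ⟨g, hgeq, hgnd⟩ :=
        (minpoly k H).exists_eq_pow_rootMultiplicity_mul_and_not_dvd hμne 0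
      set m := (minpoly k H).rootMultiplicity 0 with hm
      have hm1 : 1 ≤ m :=
        (Polynomial.rootMultiplicity_pos hμne).2
          (by rwa [Polynomial.IsRoot, ← Polynomial.coeff_zero_eq_eval_zero])
      have hcop : IsCoprime ((Polynomial.X - Polynomial.C (0 : k)) ^ m) g :=
        ((Polynomial.irreducible_X_sub_C (0 : k)).coprime_iff_not_dvd.2 hgnd).pow_left
      obtain ⟨a, b, hab⟩ := hcop
      set e : CategoryTheory.End A :=
        Polynomial.aeval H (a * (Polynomial.X - Polynomial.C (0 : k)) ^ m) with he
      set q : CategoryTheory.End A := 1 - e with hqdef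
      have hμfac :
          Polynomial.aeval H ((Polynomial.X - Polynomial.C (0 : k)) ^ m * g) = 0 := by
        rw [← hgeq]; exact hμ0
      have h1e : q = Polynomial.aeval H (b * g) := by
        have hab' : b * g + a * (Polynomial.X - Polynomial.C (0 : k)) ^ m = 1 := by
          rw [add_comm]; exact hab
        rw [hqdef, sub_eq_iff_eq_add, ← map_add, hab', map_one]
      have hmix : e * q = 0 := by
        rw [h1e, he, ← map_mul]
        have hq : a * (Polynomial.X - Polynomial.C (0 : k)) ^ m * (b * g)
            = a * b * ((Polynomial.X - Polynomial.C (0 : k)) ^ m * g) := by ring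
        rw [hq, map_mul, hμfac, mul_zero]
      have hse : (q : A ⟶ A) ≫ (e : A ⟶ A) = 0 := hmix
      have hHm : Polynomial.aeval H ((Polynomial.X - Polynomial.C (0 : k)) ^ m) = H ^ m := by
        simp
      have hz : (H ^ m : CategoryTheory.End A) * q = 0 := by
        rw [h1e, ← hHm, ← map_mul]
        have hq : (Polynomial.X - Polynomial.C (0 : k)) ^ m * (b * g)
            = b * ((Polynomial.X - Polynomial.C (0 : k)) ^ m * g) := by ring
        rw [hq, map_mul, hμfac, mul_zero]
      have hz' : (q : A ⟶ A) ≫ (H ^ m : A ⟶ A) = 0 := hz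
      have hq1f : (q : A ⟶ A) ≫ f = 0 := by
        calc (q : A ⟶ A) ≫ f
            = (q : A ⟶ A) ≫ ((H ^ m : A ⟶ A) ≫ f) := by rw [hpow m]
          _ = ((q : A ⟶ A) ≫ (H ^ m : A ⟶ A)) ≫ f := by rw [Category.assoc]
          _ = 0 := by rw [hz', zero_comp]
      set i : kernel (e : A ⟶ A) ⟶ A := kernel.ι (e : A ⟶ A) with hidef
      set p : A ⟶ kernel (e : A ⟶ A) := kernel.lift (e : A ⟶ A) (q : A ⟶ A) hse with hpdef
      have hpi : p ≫ i = (q : A ⟶ A) := kernel.lift_ι _ _ _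
      have hie : i ≫ (e : A ⟶ A) = 0 := kernel.condition _
      have hiq : i ≫ (q : A ⟶ A) = i := by
        have h7 : i ≫ (q : A ⟶ A) = i ≫ 𝟙 A - i ≫ (e : A ⟶ A) := by
          rw [← Preadditive.comp_sub]; rfl
        rw [h7, hie, sub_zero, Category.comp_id]
      have hip : i ≫ p = 𝟙 _ := by
        rw [← cancel_mono i, Category.assoc, hpi, hiq, Category.id_comp]
      have hif : i ≫ f = 0 := by
        rw [← hiq, Category.assoc, hq1f, comp_zero]
      have hKz : IsZero (kernel (e : A ⟶ A)) := by
        by_contra hK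
        exact hyp _ i p hip hK hif
      have hiz : i = 0 := hKz.eq_zero_of_src i
      haveI : Mono (e : A ⟶ A) := CategoryTheory.Abelian.mono_of_kernel_ι_eq_zero _ hiz
      have hee : e * e = e := by
        have h4 : e * q = e * 1 - e * e := by rw [hqdef, mul_sub]
        have h5 := hmix
        rw [h4, mul_one, sub_eq_zero] at h5
        exact h5.symm
      have heid : (e : A ⟶ A) ≫ (e : A ⟶ A) = (e : A ⟶ A) := hee
      have he1 : e = (1 : CategoryTheory.End A) := by
        rw [CategoryTheory.End.one_def, ← cancel_mono (e : A ⟶ A), heid, Category.id_comp]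
      have hm' : m - 1 + 1 = m := Nat.sub_add_cancel hm1
      set u : CategoryTheory.End A :=
        Polynomial.aeval H (a * (Polynomial.X - Polynomial.C (0 : k)) ^ (m - 1)) with hu
      have hXC : Polynomial.aeval H (Polynomial.X - Polynomial.C (0 : k)) = H := by simp
      have huH : u * H = 1 := by
        have h8 : Polynomial.aeval H
            (a * (Polynomial.X - Polynomial.C (0 : k)) ^ (m - 1)
              * (Polynomial.X - Polynomial.C (0 : k))) = u * H := by
          rw [map_mul, hXC, ← hu]
        have hq : a * (Polynomial.X - Polynomial.C (0 : k)) ^ (m - 1)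
            * (Polynomial.X - Polynomial.C (0 : k))
            = a * (Polynomial.X - Polynomial.C (0 : k)) ^ m := by
          rw [mul_assoc, ← pow_succ, hm']
        rw [← h8, hq, ← he, he1]
      have hHu : H * u = 1 := by
        have h9 := hcomm (a * (Polynomial.X - Polynomial.C (0 : k)) ^ (m - 1)) Polynomial.X
        rw [Polynomial.aeval_X, ← hu] at h9
        rw [← h9, huH]
      exact key u huH hHu
    · have hXd := congrArg (Polynomial.aeval H) (Polynomial.X_mul_divX_add (minpoly k H))
      rw [hμ0, map_add, map_mul, Polynomial.aeval_X, Polynomial.aeval_C] at hXd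
      set d : CategoryTheory.End A := Polynomial.aeval H ((minpoly k H).divX) with hd
      set c : k := (minpoly k H).coeff 0 with hcdef
      rw [Algebra.algebraMap_eq_smul_one] at hXd
      have hHd : H * d = -(c • (1 : CategoryTheory.End A)) :=
        eq_neg_of_add_eq_zero_left hXd
      set u : CategoryTheory.End A := (-c)⁻¹ • d with hu
      have hHu : H * u = 1 := by
        rw [hu, mul_smul_comm, hHd, ← neg_smul, smul_smul,
          inv_mul_cancel₀ (neg_ne_zero.2 hc), one_smul]
      have huH : u * H = 1 := by
        have h9 := hcomm ((minpoly k H).divX) Polynomial.X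
        rw [Polynomial.aeval_X, ← hd] at h9
        rw [hu, smul_mul_assoc, h9, hHd, ← neg_smul, smul_smul,
          inv_mul_cancel₀ (neg_ne_zero.2 hc), one_smul]
      exact key u huH hHu
end
end
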